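/- arXiv:2303.13771 — 5 statements merged into one kernel-verified Lean document; each statement's English description precedes it below -/
import Mathlib

section
/- Let D ≥ 1 be an integer and let V be a real number with 0 < V < D(D+1)/3. Define f(x) = ∑_{z=1}^{D} (2z² − 2V)·x^{z²} − V. Then there exists x ∈ (0, 1) with f(x) = 0; equivalently, there exists γ > 0 with ∑_{z=1}^{D} (2z² − 2V)·e^{-γ z²} − V = 0. Moreover, for any such γ > 0 the pmf p(z) = C·e^{-γ z²}, with C = 1/(2·∑_{z=1}^{D} e^{-γ z²} + 1), is strictly decreasing in |z| on {0, 1, …, D}: for all integers 0 ≤ z < z' ≤ D, p(z') < p(z). -/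
open Finset Real

lemma sum_sq_Icc (D : ℕ) :
    (∑ z ∈ Finset.Icc 1 D, (z : ℝ) ^ 2) = (D : ℝ) * ((D : ℝ) + 1) * (2 * D + 1) / 6 := by
  induction D with
  | zero => simp
  | succ n ih =>
    rw [Finset.sum_Icc_succ_top (by omega : 1 ≤ n + 1), ih]
    push_cast
    ring

/-- If `0 < V < D(D+1)/3` then `f(x) = ∑_{z=1}^D (2z² − 2V) x^{z²} − V` has a root in `(0,1)`
(equivalently, there is `γ > 0` solving the variance equation), and for any such `γ > 0`
the pmf `p z = C e^{-γ z²}` is strictly decreasing in `|z|` on `{0, …, D}`. -/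
theorem tablebuilder_root_exists_and_decreasing
    (D : ℕ) (hD : 1 ≤ D) (V : ℝ) (hV0 : 0 < V) (hV1 : V < (D : ℝ) * ((D : ℝ) + 1) / 3)
    (f : ℝ → ℝ)
    (hf : ∀ x : ℝ, f x = (∑ z ∈ Finset.Icc 1 D, (2 * (z : ℝ) ^ 2 - 2 * V) * x ^ (z ^ 2)) - V) :
    (∃ x ∈ Set.Ioo (0 : ℝ) 1, f x = 0) ∧
    (∀ γ : ℝ, 0 < γ →
      (∑ z ∈ Finset.Icc 1 D, (2 * (z : ℝ) ^ 2 - 2 * V) * Real.exp (-γ * (z : ℝ) ^ 2)) - V = 0 →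
      ∀ z z' : ℕ, z < z' → z' ≤ D →
        (1 / (2 * ∑ w ∈ Finset.Icc 1 D, Real.exp (-γ * (w : ℝ) ^ 2) + 1)) *
            Real.exp (-γ * (z' : ℝ) ^ 2) <
        (1 / (2 * ∑ w ∈ Finset.Icc 1 D, Real.exp (-γ * (w : ℝ) ^ 2) + 1)) *
            Real.exp (-γ * (z : ℝ) ^ 2)) := by
  constructor
  · -- root existence via IVT
    have hcont : ContinuousOn f (Set.Icc (0 : ℝ) 1) := by
      have hfe : f = fun x => (∑ z ∈ Finset.Icc 1 D,
          (2 * (z : ℝ) ^ 2 - 2 * V) * x ^ (z ^ 2)) - V := funext hf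
      rw [hfe]
      fun_prop
    have hf0 : f 0 = -V := by
      rw [hf]
      have : ∀ z ∈ Finset.Icc 1 D, (2 * (z : ℝ) ^ 2 - 2 * V) * (0 : ℝ) ^ (z ^ 2) = 0 := by
        intro z hz
        simp only [Finset.mem_Icc] at hz
        rw [zero_pow (by nlinarith [hz.1] : z ^ 2 ≠ 0)]
        ring
      rw [Finset.sum_congr rfl this]
      simp
    have hf1 : 0 < f 1 := by
      rw [hf]
      have hs : (∑ z ∈ Finset.Icc 1 D, (2 * (z : ℝ) ^ 2 - 2 * V) * (1 : ℝ) ^ (z ^ 2))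
          = 2 * ((D : ℝ) * ((D : ℝ) + 1) * (2 * D + 1) / 6) - 2 * V * D := by
        simp only [one_pow, mul_one]
        rw [Finset.sum_sub_distrib, ← Finset.mul_sum, sum_sq_Icc]
        simp [Nat.card_Icc]
        ring
      rw [hs]
      have hD1 : (1 : ℝ) ≤ D := by exact_mod_cast hD
      nlinarith
    have h0 : (0 : ℝ) ∈ Set.Ioo (f 0) (f 1) := ⟨by rw [hf0]; linarith, hf1⟩
    have := intermediate_value_Ioo (by norm_num : (0:ℝ) ≤ 1) hcont h0
    obtain ⟨x, hx, hfx⟩ := this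
    exact ⟨x, hx, hfx⟩
  · intro γ hγ _ z z' hzz' hz'D
    have hsum : 0 ≤ ∑ w ∈ Finset.Icc 1 D, Real.exp (-γ * (w : ℝ) ^ 2) :=
      Finset.sum_nonneg fun _ _ => (Real.exp_pos _).le
    have hC : 0 < 1 / (2 * ∑ w ∈ Finset.Icc 1 D, Real.exp (-γ * (w : ℝ) ^ 2) + 1) := by
      positivity
    apply mul_lt_mul_of_pos_left _ hC
    apply Real.exp_lt_exp.mpr
    have : (z : ℝ) ^ 2 < (z' : ℝ) ^ 2 := by
      have : (z : ℝ) < z' := by exact_mod_cast hzz'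
      nlinarith [Nat.cast_nonneg (α := ℝ) z]
    nlinarith
end

section
/- Let D ≥ 1 be an integer, γ > 0 and ε > 0 real numbers, and define the pmf on the integers by p(z) = C·e^{-γ z²} for |z| ≤ D and p(z) = 0 for |z| > D, where C = 1/(2·∑_{z=1}^{D} e^{-γ z²} + 1). Let z* = ⌊1/2 − ε/(2γ)⌋ and suppose −D < z* ≤ 0. Then for all integers n, n′ with |n − n′| ≤ 1 and every set E of integers, ∑_{y∈E} p(y − n) ≤ e^{ε} · ∑_{y∈E} p(y − n′) + δ, where δ = C·e^{-γ D²} + C·∑_{z=−D+1}^{z*} (e^{-γ z²} − e^{ε}·e^{-γ (z−1)²}). That is, the mechanism M(x) = q(x) + Z for a single counting query q satisfies (ε, δ)-differential privacy with this δ. -/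
open Finset Real

/-- If `z* = ⌊1/2 − ε/(2γ)⌋` satisfies `−D < z* ≤ 0`, the TableBuilder mechanism with noise
pmf `p z = C e^{-γ z²}` on `[-D, D]` satisfies `(ε, δ)`-DP with
`δ = C e^{-γ D²} + C ∑_{z=−D+1}^{z*} (e^{-γ z²} − e^ε e^{-γ (z−1)²})`. -/
theorem tablebuilder_dp_general_case
    (D : ℕ) (hD : 1 ≤ D) (γ ε : ℝ) (hγ : 0 < γ) (hε : 0 < ε)
    (C : ℝ)
    (hC : C = 1 / (2 * ∑ w ∈ Finset.Icc 1 D, Real.exp (-γ * (w : ℝ) ^ 2) + 1))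
    (p : ℤ → ℝ)
    (hp : ∀ z : ℤ, p z = if |z| ≤ (D : ℤ) then C * Real.exp (-γ * (z : ℝ) ^ 2) else 0)
    (zstar : ℤ) (hzstar : zstar = ⌊(1 : ℝ) / 2 - ε / (2 * γ)⌋)
    (hlow : -(D : ℤ) < zstar) (hhigh : zstar ≤ 0)
    (δ : ℝ)
    (hδ : δ = C * Real.exp (-γ * (D : ℝ) ^ 2) +
        C * ∑ z ∈ Finset.Icc (-(D : ℤ) + 1) zstar,
          (Real.exp (-γ * (z : ℝ) ^ 2) - Real.exp ε * Real.exp (-γ * ((z : ℝ) - 1) ^ 2))) :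
    ∀ n n' : ℤ, |n - n'| ≤ 1 → ∀ E : Set ℤ,
      (∑' y : E, p ((y : ℤ) - n)) ≤ Real.exp ε * (∑' y : E, p ((y : ℤ) - n')) + δ := by
  have hCpos : 0 < C := by
    rw [hC]
    have : (0:ℝ) ≤ ∑ w ∈ Finset.Icc 1 D, Real.exp (-γ * (w : ℝ) ^ 2) :=
      Finset.sum_nonneg fun w _ => (Real.exp_pos _).le
    positivity
  have hp0 : ∀ z, 0 ≤ p z := by
    intro z; rw [hp]
    split
    · positivity
    · exact le_rfl
  -- key inequality A : for z ≤ zstar, exp ε * exp (-γ(z-1)²) ≤ exp(-γ z²)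
  have hA : ∀ z : ℤ, z ≤ zstar →
      Real.exp ε * Real.exp (-γ * ((z : ℝ) - 1) ^ 2) ≤ Real.exp (-γ * (z : ℝ) ^ 2) := by
    intro z hz
    rw [← Real.exp_add, Real.exp_le_exp]
    have hzr : (z : ℝ) ≤ 1 / 2 - ε / (2 * γ) := by
      have h1 : (z : ℝ) ≤ (zstar : ℝ) := by exact_mod_cast hz
      have h2 : ((⌊(1 : ℝ) / 2 - ε / (2 * γ)⌋ : ℤ) : ℝ) ≤ 1 / 2 - ε / (2 * γ) :=
        Int.floor_le _
      rw [hzstar] at h1; linarith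
    have h3 : 2 * γ * (z : ℝ) ≤ γ - ε := by
      have := mul_le_mul_of_nonneg_left hzr (by linarith : (0:ℝ) ≤ 2 * γ)
      have hγ' : γ ≠ 0 := ne_of_gt hγ
      field_simp at this
      linarith
    nlinarith
  -- key inequality B : for zstar < z, exp(-γ z²) ≤ exp ε * exp(-γ(z-1)²)
  have hB : ∀ z : ℤ, zstar < z →
      Real.exp (-γ * (z : ℝ) ^ 2) ≤ Real.exp ε * Real.exp (-γ * ((z : ℝ) - 1) ^ 2) := by
    intro z hz
    rw [← Real.exp_add, Real.exp_le_exp]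
    have hzr : 1 / 2 - ε / (2 * γ) < (z : ℝ) := by
      have h1 : (zstar : ℝ) + 1 ≤ (z : ℝ) := by exact_mod_cast hz
      have h2 : (1 : ℝ) / 2 - ε / (2 * γ) < (⌊(1 : ℝ) / 2 - ε / (2 * γ)⌋ : ℤ) + 1 :=
        Int.lt_floor_add_one _
      rw [hzstar] at h1; linarith
    have h3 : γ - ε ≤ 2 * γ * (z : ℝ) := by
      have := mul_le_mul_of_nonneg_left hzr.le (by linarith : (0:ℝ) ≤ 2 * γ)
      have hγ' : γ ≠ 0 := ne_of_gt hγ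
      field_simp at this
      linarith
    nlinarith
  -- δ is nonnegative
  have hδ0 : 0 ≤ δ := by
    rw [hδ]
    have h1 : (0:ℝ) ≤ ∑ z ∈ Finset.Icc (-(D : ℤ) + 1) zstar,
        (Real.exp (-γ * (z : ℝ) ^ 2) - Real.exp ε * Real.exp (-γ * ((z : ℝ) - 1) ^ 2)) := by
      apply Finset.sum_nonneg
      intro z hz
      rw [Finset.mem_Icc] at hz
      have := hA z hz.2
      linarith
    have h2 : (0:ℝ) < Real.exp (-γ * (D : ℝ) ^ 2) := Real.exp_pos _
    nlinarith
  -- the key finite-sum bound for shift by -1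
  have key : ∑ z ∈ Finset.Icc (-(D : ℤ)) (D : ℤ),
      max (p z - Real.exp ε * p (z - 1)) 0 ≤ δ := by
    have hIcc : Finset.Icc (-(D : ℤ)) (D : ℤ) = Finset.Ioc (-(D:ℤ) - 1) (D : ℤ) := by
      ext z; simp [Finset.mem_Icc, Finset.mem_Ioc]
    have hsplit1 : Finset.Ioc (-(D:ℤ) - 1) (D : ℤ) =
        Finset.Ioc (-(D:ℤ) - 1) (-(D:ℤ)) ∪ Finset.Ioc (-(D:ℤ)) (D : ℤ) :=
      (Finset.Ioc_union_Ioc_eq_Ioc (by omega) (by omega)).symm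
    have hsplit2 : Finset.Ioc (-(D:ℤ)) (D : ℤ) =
        Finset.Ioc (-(D:ℤ)) zstar ∪ Finset.Ioc zstar (D : ℤ) :=
      (Finset.Ioc_union_Ioc_eq_Ioc (by omega) (by omega)).symm
    have hd1 : Disjoint (Finset.Ioc (-(D:ℤ) - 1) (-(D:ℤ))) (Finset.Ioc (-(D:ℤ)) (D : ℤ)) := by
      rw [Finset.disjoint_left]
      intro a ha hb
      rw [Finset.mem_Ioc] at ha hb; omega
    have hd2 : Disjoint (Finset.Ioc (-(D:ℤ)) zstar) (Finset.Ioc zstar (D : ℤ)) := by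
      rw [Finset.disjoint_left]
      intro a ha hb
      rw [Finset.mem_Ioc] at ha hb; omega
    rw [hIcc, hsplit1, Finset.sum_union hd1, hsplit2, Finset.sum_union hd2]
    have hsing : Finset.Ioc (-(D:ℤ) - 1) (-(D:ℤ)) = {-(D:ℤ)} := by
      ext z; simp [Finset.mem_Ioc]; omega
    have e1 : ∑ z ∈ Finset.Ioc (-(D:ℤ) - 1) (-(D:ℤ)),
        max (p z - Real.exp ε * p (z - 1)) 0 = C * Real.exp (-γ * (D : ℝ) ^ 2) := by
      rw [hsing, Finset.sum_singleton]
      have hpD : p (-(D:ℤ)) = C * Real.exp (-γ * (D : ℝ) ^ 2) := by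
        rw [hp]
        rw [if_pos (by simp [abs_neg])]
        push_cast; ring_nf
      have hpD1 : p (-(D:ℤ) - 1) = 0 := by
        rw [hp, if_neg]
        rw [abs_le]
        push_neg
        intro h; omega
      rw [hpD, hpD1, mul_zero, sub_zero]
      exact max_eq_left (by positivity)
    have e2 : ∑ z ∈ Finset.Ioc (-(D:ℤ)) zstar, max (p z - Real.exp ε * p (z - 1)) 0 =
        C * ∑ z ∈ Finset.Icc (-(D : ℤ) + 1) zstar,
          (Real.exp (-γ * (z : ℝ) ^ 2) - Real.exp ε * Real.exp (-γ * ((z : ℝ) - 1) ^ 2)) := by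
      have hIoc : Finset.Ioc (-(D:ℤ)) zstar = Finset.Icc (-(D:ℤ) + 1) zstar := by
        ext z; simp [Finset.mem_Ioc, Finset.mem_Icc]
      rw [hIoc, Finset.mul_sum]
      apply Finset.sum_congr rfl
      intro z hz
      rw [Finset.mem_Icc] at hz
      have hpz : p z = C * Real.exp (-γ * (z : ℝ) ^ 2) := by
        rw [hp, if_pos]; rw [abs_le]; omega
      have hpz1 : p (z - 1) = C * Real.exp (-γ * ((z : ℝ) - 1) ^ 2) := by
        rw [hp, if_pos (by rw [abs_le]; omega)]
        push_cast; ring_nf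
      rw [hpz, hpz1]
      rw [max_eq_left]
      · ring
      · have := hA z hz.2
        nlinarith
    have e3 : ∑ z ∈ Finset.Ioc zstar (D : ℤ), max (p z - Real.exp ε * p (z - 1)) 0 = 0 := by
      apply Finset.sum_eq_zero
      intro z hz
      rw [Finset.mem_Ioc] at hz
      have hpz : p z = C * Real.exp (-γ * (z : ℝ) ^ 2) := by
        rw [hp, if_pos]; rw [abs_le]; omega
      have hpz1 : p (z - 1) = C * Real.exp (-γ * ((z : ℝ) - 1) ^ 2) := by
        rw [hp, if_pos (by rw [abs_le]; omega)]
        push_cast; ring_nf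
      rw [hpz, hpz1]
      apply max_eq_right
      have := hB z hz.1
      nlinarith
    rw [e1, e2, e3, hδ]
    linarith
  -- symmetry of p
  have hpeven : ∀ z : ℤ, p (-z) = p z := by
    intro z
    rw [hp, hp, abs_neg]
    congr 1
    push_cast; ring_nf
  intro n n' hnn' E
  set k : ℤ := n - n' with hk
  have hk1 : k = -1 ∨ k = 0 ∨ k = 1 := by
    rw [abs_le] at hnn'; omega
  -- summability
  have hsum : ∀ m : ℤ, Summable (fun y : ℤ => p (y - m)) := by
    intro m
    apply summable_of_ne_finset_zero (s := Finset.Icc (m - D) (m + D))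
    intro y hy
    rw [Finset.mem_Icc] at hy
    rw [hp, if_neg]
    rw [abs_le]; omega
  set g : ℤ → ℝ := fun y => max (p (y - n) - Real.exp ε * p (y - n')) 0 with hg
  have hg0 : ∀ y, 0 ≤ g y := fun y => le_max_right _ _
  have hgle : ∀ y, g y ≤ p (y - n) := by
    intro y
    apply max_le
    · have := hp0 (y - n')
      have := (Real.exp_pos ε).le
      nlinarith
    · exact hp0 _
  have hsumg : Summable g := Summable.of_nonneg_of_le hg0 hgle (hsum n)
  have hpt : ∀ y : ℤ, p (y - n) ≤ Real.exp ε * p (y - n') + g y := by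
    intro y
    have := le_max_left (p (y - n) - Real.exp ε * p (y - n')) 0
    linarith
  -- bound the total sum of g by δ
  have hgtot : (∑' y : ℤ, g y) ≤ δ := by
    have htrans : (∑' y : ℤ, g y) = ∑' z : ℤ, g (z + n) :=
      (Equiv.tsum_eq (Equiv.addRight n) g).symm
    have hgz : ∀ z : ℤ, g (z + n) = max (p z - Real.exp ε * p (z + k)) 0 := by
      intro z
      have h1 : z + n - n = z := by ring
      have h2 : z + n - n' = z + k := by rw [hk]; ring
      rw [hg]; dsimp only; rw [h1, h2]
    have hfin : (∑' z : ℤ, g (z + n)) =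
        ∑ z ∈ Finset.Icc (-(D : ℤ)) (D : ℤ), max (p z - Real.exp ε * p (z + k)) 0 := by
      rw [tsum_congr hgz]
      apply tsum_eq_sum
      intro z hz
      rw [Finset.mem_Icc] at hz
      have hpz : p z = 0 := by rw [hp, if_neg]; rw [abs_le]; omega
      rw [hpz]
      apply max_eq_right
      have := hp0 (z + k)
      have := (Real.exp_pos ε).le
      nlinarith
    rw [htrans, hfin]
    rcases hk1 with h | h | h
    · -- k = -1 : same as key after rewriting z + (-1) = z - 1
      have : ∀ z : ℤ, z + k = z - 1 := fun z => by omega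
      calc ∑ z ∈ Finset.Icc (-(D : ℤ)) (D : ℤ), max (p z - Real.exp ε * p (z + k)) 0
          = ∑ z ∈ Finset.Icc (-(D : ℤ)) (D : ℤ), max (p z - Real.exp ε * p (z - 1)) 0 := by
            apply Finset.sum_congr rfl; intro z _; rw [this z]
        _ ≤ δ := key
    · -- k = 0 : every term is 0
      have hz0 : ∑ z ∈ Finset.Icc (-(D : ℤ)) (D : ℤ), max (p z - Real.exp ε * p (z + k)) 0
          = 0 := by
        apply Finset.sum_eq_zero
        intro z _
        apply max_eq_right
        have h1 : z + k = z := by omega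
        rw [h1]
        have := hp0 z
        nlinarith [Real.one_le_exp hε.le]
      rw [hz0]; exact hδ0
    · -- k = 1 : reindex via negation to reduce to key
      have hre : ∑ z ∈ Finset.Icc (-(D : ℤ)) (D : ℤ), max (p z - Real.exp ε * p (z + k)) 0
          = ∑ z ∈ Finset.Icc (-(D : ℤ)) (D : ℤ), max (p z - Real.exp ε * p (z - 1)) 0 := by
        apply Finset.sum_nbij' (i := fun z => -z) (j := fun z => -z)
        · intro a ha; rw [Finset.mem_Icc] at *; omega
        · intro a ha; rw [Finset.mem_Icc] at *; omega
        · intro a _; omega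
        · intro a _; omega
        · intro a _
          have h1 : -a - 1 = -(a + k) := by omega
          rw [hpeven a, h1, hpeven (a + k)]
      rw [hre]; exact key
  -- put it together
  have hsE1 : Summable (fun y : E => p ((y : ℤ) - n)) := (hsum n).subtype E
  have hsE2 : Summable (fun y : E => p ((y : ℤ) - n')) := (hsum n').subtype E
  have hsEg : Summable (fun y : E => g (y : ℤ)) := hsumg.subtype E
  calc (∑' y : E, p ((y : ℤ) - n))
      ≤ ∑' y : E, (Real.exp ε * p ((y : ℤ) - n') + g (y : ℤ)) := by
        refine Summable.tsum_le_tsum (fun y => hpt (y : ℤ)) hsE1 ?_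
        exact Summable.add (hsE2.mul_left _) hsEg
    _ = Real.exp ε * (∑' y : E, p ((y : ℤ) - n')) + ∑' y : E, g (y : ℤ) := by
        rw [Summable.tsum_add (hsE2.mul_left _) hsEg, tsum_mul_left]
    _ ≤ Real.exp ε * (∑' y : E, p ((y : ℤ) - n')) + δ := by
        have : (∑' y : E, g (y : ℤ)) ≤ ∑' y : ℤ, g y := Summable.tsum_subtype_le g E hg0 hsumg
        linarith [hgtot]
end

section
/- Let D ≥ 1 be an integer, γ > 0 and ε > 0 real numbers, and define the pmf on the integers by p(z) = C·e^{-γ z²} for |z| ≤ D and p(z) = 0 for |z| > D, where C = 1/(2·∑_{z=1}^{D} e^{-γ z²} + 1). Suppose δ ≥ 0 is such that for all integers n, n′ with |n − n′| ≤ 1 and every set E of integers, ∑_{y∈E} p(y − n) ≤ e^{ε} · ∑_{y∈E} p(y − n′) + δ. Then δ ≥ C·e^{-γ D²}. In other words, C·e^{-γ D²} = p(−D) is a lower bound on the δ achievable by the TableBuilder mechanism at any privacy level ε > 0. -/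
open Finset Real

/-- Any `δ ≥ 0` for which the TableBuilder mechanism satisfies `(ε, δ)`-DP must satisfy
`δ ≥ C e^{-γ D²} = p(−D)`. -/
theorem tablebuilder_dp_delta_lower_bound
    (D : ℕ) (hD : 1 ≤ D) (γ ε : ℝ) (hγ : 0 < γ) (hε : 0 < ε)
    (C : ℝ)
    (hC : C = 1 / (2 * ∑ w ∈ Finset.Icc 1 D, Real.exp (-γ * (w : ℝ) ^ 2) + 1))
    (p : ℤ → ℝ)
    (hp : ∀ z : ℤ, p z = if |z| ≤ (D : ℤ) then C * Real.exp (-γ * (z : ℝ) ^ 2) else 0)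
    (δ : ℝ) (hδ0 : 0 ≤ δ)
    (hDP : ∀ n n' : ℤ, |n - n'| ≤ 1 → ∀ E : Set ℤ,
      (∑' y : E, p ((y : ℤ) - n)) ≤ Real.exp ε * (∑' y : E, p ((y : ℤ) - n')) + δ) :
    C * Real.exp (-γ * (D : ℝ) ^ 2) ≤ δ := by
  have h := hDP 1 0 (by norm_num) ({(D : ℤ) + 1} : Set ℤ)
  have h1 : (∑' y : ({(D : ℤ) + 1} : Set ℤ), p ((y : ℤ) - 1)) = p ((D : ℤ)) := by
    rw [tsum_singleton ((D : ℤ) + 1) (fun y => p (y - 1))]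
    norm_num
  have h2 : (∑' y : ({(D : ℤ) + 1} : Set ℤ), p ((y : ℤ) - 0)) = p ((D : ℤ) + 1) := by
    rw [tsum_singleton ((D : ℤ) + 1) (fun y => p (y - 0))]
    norm_num
  rw [h1, h2] at h
  have hpD : p ((D : ℤ)) = C * Real.exp (-γ * (D : ℝ) ^ 2) := by
    rw [hp]
    simp
  have hpD1 : p ((D : ℤ) + 1) = 0 := by
    rw [hp]
    rw [if_neg]
    rw [abs_of_nonneg (by positivity)]; omega
  rw [hpD, hpD1] at h
  simpa using h
end

section
/- Let D ≥ 1 be an integer and define δ(γ) = e^{-γ D²} / (2·∑_{z=1}^{D} e^{-γ z²} + 1) for real γ. Then δ is a strictly decreasing function of γ on ℝ; equivalently, δ is a strictly increasing function of x = e^{-γ}. -/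
open Finset Real

/-- `δ(γ) = e^{-γ D²} / (2 ∑_{z=1}^D e^{-γ z²} + 1)` is strictly decreasing in `γ` on `ℝ`. -/
theorem tablebuilder_delta_strictAnti
    (D : ℕ) (hD : 1 ≤ D)
    (δ : ℝ → ℝ)
    (hδ : ∀ γ : ℝ, δ γ =
        Real.exp (-γ * (D : ℝ) ^ 2) /
        (2 * ∑ z ∈ Finset.Icc 1 D, Real.exp (-γ * (z : ℝ) ^ 2) + 1)) :
    StrictAnti δ := by
  set f : ℝ → ℝ := fun γ =>
    2 * ∑ z ∈ Finset.Icc 1 D, Real.exp (γ * ((D : ℝ) ^ 2 - (z : ℝ) ^ 2)) +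
      Real.exp (γ * (D : ℝ) ^ 2) with hf
  have key : ∀ γ : ℝ, δ γ = (f γ)⁻¹ := by
    intro γ
    have hfγ : f γ = Real.exp (γ * (D : ℝ) ^ 2) *
        (2 * ∑ z ∈ Finset.Icc 1 D, Real.exp (-γ * (z : ℝ) ^ 2) + 1) := by
      simp only [hf]
      have hterm : ∀ z ∈ Finset.Icc 1 D,
          Real.exp (γ * ((D : ℝ) ^ 2 - (z : ℝ) ^ 2)) =
          Real.exp (γ * (D : ℝ) ^ 2) * Real.exp (-γ * (z : ℝ) ^ 2) := by
        intro z _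
        rw [← Real.exp_add]
        ring_nf
      rw [Finset.sum_congr rfl hterm, ← Finset.mul_sum]
      ring
    rw [hδ, hfγ, mul_inv, ← Real.exp_neg, div_eq_mul_inv]
    simp only [neg_mul]
  have hpos : ∀ γ : ℝ, 0 < f γ := by
    intro γ
    simp only [hf]
    positivity
  intro a b hab
  rw [key a, key b]
  apply inv_strictAnti₀ (hpos a)
  simp only [hf]
  apply add_lt_add_of_le_of_lt
  · apply mul_le_mul_of_nonneg_left _ (by norm_num : (0:ℝ) ≤ 2)
    apply Finset.sum_le_sum
    intro z hz
    apply Real.exp_le_exp.mpr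
    apply mul_le_mul_of_nonneg_right hab.le
    have hzD : (z : ℝ) ≤ (D : ℝ) := by
      exact_mod_cast (Finset.mem_Icc.mp hz).2
    have hz0 : (0:ℝ) ≤ (z:ℝ) := by positivity
    nlinarith
  · apply Real.exp_lt_exp.mpr
    apply mul_lt_mul_of_pos_right hab
    have : (1:ℝ) ≤ (D:ℝ) := by exact_mod_cast hD
    positivity
end

section
/- Let D ≥ 1 be an integer, ε > 0 a real number, and γ a real number with ε/(2D+1) ≤ γ < ε/(2D−1). Define the pmf on the integers by p(z) = C·e^{-γ z²} for |z| ≤ D and p(z) = 0 for |z| > D, where C = 1/(2·∑_{z=1}^{D} e^{-γ z²} + 1). Then for all integers n, n′ with |n − n′| ≤ 1 and every set E of integers, ∑_{y∈E} p(y − n) ≤ e^{ε} · ∑_{y∈E} p(y − n′) + C·e^{-γ D²}. That is, the TableBuilder mechanism M(x) = q(x) + Z for a single counting query q achieves (ε, δ)-differential privacy with δ = e^{-γ D²} / (2·∑_{z=1}^{D} e^{-γ z²} + 1), and its variance equals (∑_{z=1}^{D} 2z²·e^{-γ z²}) / (2·∑_{z=1}^{D} e^{-γ z²} + 1). -/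
open Finset Real

lemma sum_Icc_neg_even (D : ℕ) (f : ℤ → ℝ) (heven : ∀ z : ℤ, f (-z) = f z)
    (h0 : f 0 = 0) :
    ∑ z ∈ Finset.Icc (-(D : ℤ)) (D : ℤ), f z = ∑ w ∈ Finset.Icc 1 D, 2 * f (w : ℤ) := by
  induction D with
  | zero => simpa using h0
  | succ D ih =>
    have h1 : Finset.Icc (-(D + 1 : ℤ)) (D + 1 : ℤ) =
        insert (-(D + 1 : ℤ)) (insert ((D : ℤ) + 1) (Finset.Icc (-(D : ℤ)) (D : ℤ))) := by
      ext z
      simp only [Finset.mem_Icc, Finset.mem_insert]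
      omega
    have h2 : (-(D + 1 : ℤ)) ∉ insert ((D : ℤ) + 1) (Finset.Icc (-(D : ℤ)) (D : ℤ)) := by
      simp only [Finset.mem_Icc, Finset.mem_insert]
      omega
    have h3 : ((D : ℤ) + 1) ∉ Finset.Icc (-(D : ℤ)) (D : ℤ) := by
      simp only [Finset.mem_Icc]
      omega
    have h4 : Finset.Icc 1 (D + 1) = insert (D + 1) (Finset.Icc 1 D) := by
      ext w
      simp only [Finset.mem_Icc, Finset.mem_insert]
      omega
    have h5 : (D + 1) ∉ Finset.Icc 1 D := by
      simp only [Finset.mem_Icc]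
      omega
    push_cast [h1, h4, Finset.sum_insert h2, Finset.sum_insert h3, Finset.sum_insert h5, ih,
      heven ((D : ℤ) + 1)]
    ring

/-- If `ε/(2D+1) ≤ γ < ε/(2D−1)`, the TableBuilder mechanism with noise pmf
`p z = C e^{-γ z²}` on `[-D, D]` achieves `(ε, δ)`-DP with
`δ = e^{-γ D²}/(2 ∑_{z=1}^D e^{-γ z²} + 1)`, and its variance equals
`(∑_{z=1}^D 2z² e^{-γ z²})/(2 ∑_{z=1}^D e^{-γ z²} + 1)`. -/
theorem tablebuilder_designed_dp
    (D : ℕ) (hD : 1 ≤ D) (ε : ℝ) (hε : 0 < ε) (γ : ℝ)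
    (hγlow : ε / (2 * (D : ℝ) + 1) ≤ γ) (hγhigh : γ < ε / (2 * (D : ℝ) - 1))
    (C : ℝ)
    (hC : C = 1 / (2 * ∑ w ∈ Finset.Icc 1 D, Real.exp (-γ * (w : ℝ) ^ 2) + 1))
    (p : ℤ → ℝ)
    (hp : ∀ z : ℤ, p z = if |z| ≤ (D : ℤ) then C * Real.exp (-γ * (z : ℝ) ^ 2) else 0) :
    (∀ n n' : ℤ, |n - n'| ≤ 1 → ∀ E : Set ℤ,
      (∑' y : E, p ((y : ℤ) - n)) ≤
        Real.exp ε * (∑' y : E, p ((y : ℤ) - n')) + C * Real.exp (-γ * (D : ℝ) ^ 2)) ∧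
    (∑ z ∈ Finset.Icc (-(D : ℤ)) (D : ℤ), (z : ℝ) ^ 2 * p z =
      (∑ z ∈ Finset.Icc 1 D, 2 * (z : ℝ) ^ 2 * Real.exp (-γ * (z : ℝ) ^ 2)) /
      (2 * ∑ z ∈ Finset.Icc 1 D, Real.exp (-γ * (z : ℝ) ^ 2) + 1)) := by
  have hDR : (1 : ℝ) ≤ (D : ℝ) := by exact_mod_cast hD
  have hsumpos : (0 : ℝ) < 2 * ∑ w ∈ Finset.Icc 1 D, Real.exp (-γ * (w : ℝ) ^ 2) + 1 := by
    have : (0 : ℝ) ≤ ∑ w ∈ Finset.Icc 1 D, Real.exp (-γ * (w : ℝ) ^ 2) :=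
      Finset.sum_nonneg fun _ _ => (Real.exp_pos _).le
    linarith
  have hCpos : 0 < C := by rw [hC]; positivity
  have hγpos : 0 < γ :=
    lt_of_lt_of_le (div_pos hε (by linarith)) hγlow
  have hp_nonneg : ∀ z : ℤ, 0 ≤ p z := by
    intro z
    rw [hp]
    split
    · positivity
    · exact le_refl 0
  -- key pointwise inequality
  have key : ∀ m z : ℤ, (m = 1 ∨ m = -1) → z ≠ m * D →
      p z ≤ Real.exp ε * p (z + m) := by
    have main : ∀ m z : ℤ, (m : ℝ) ^ 2 = 1 → z ≠ m * D → |z| ≤ (D : ℤ) →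
        |z + m| ≤ (D : ℤ) → (z : ℝ) * m ≤ (D : ℝ) - 1 →
        p z ≤ Real.exp ε * p (z + m) := by
      intro m z hm2 hz hzD hzmD hzm
      rw [hp z, hp (z + m), if_pos hzD, if_pos hzmD]
      have hexp : Real.exp (-γ * (z : ℝ) ^ 2) ≤
          Real.exp ε * Real.exp (-γ * ((z : ℤ) + m : ℤ) ^ 2) := by
        rw [← Real.exp_add]
        apply Real.exp_le_exp.2
        have hineq : γ * (2 * ((z : ℝ) * m) + 1) ≤ ε := by
          have h1 : γ * (2 * ((z : ℝ) * m) + 1) ≤ γ * (2 * (D : ℝ) - 1) := by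
            apply mul_le_mul_of_nonneg_left _ hγpos.le
            linarith
          have h2 : γ * (2 * (D : ℝ) - 1) < ε := (lt_div_iff₀ (by linarith)).1 hγhigh
          linarith
        push_cast
        nlinarith [hineq, hm2]
      calc C * Real.exp (-γ * (z : ℝ) ^ 2)
          ≤ C * (Real.exp ε * Real.exp (-γ * ((z : ℤ) + m : ℤ) ^ 2)) :=
            mul_le_mul_of_nonneg_left hexp hCpos.le
        _ = Real.exp ε * (C * Real.exp (-γ * ((z + m : ℤ) : ℝ) ^ 2)) := by push_cast; ring
    intro m z hm hz
    by_cases hzD : |z| ≤ (D : ℤ)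
    · rcases hm with rfl | rfl
      · refine main 1 z (by norm_num) hz hzD (by rw [abs_le] at hzD ⊢; omega) ?_
        have : z ≤ (D : ℤ) - 1 := by rw [abs_le] at hzD; omega
        have : (z : ℝ) ≤ (D : ℝ) - 1 := by exact_mod_cast this
        push_cast
        linarith
      · refine main (-1) z (by norm_num) hz hzD (by rw [abs_le] at hzD ⊢; omega) ?_
        have : -z ≤ (D : ℤ) - 1 := by rw [abs_le] at hzD; omega
        have : (-z : ℝ) ≤ (D : ℝ) - 1 := by exact_mod_cast this
        push_cast
        linarith
    · rw [hp z, if_neg hzD]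
      have := hp_nonneg (z + m)
      positivity
  -- summability facts
  have hsum : ∀ k : ℤ, Summable fun y : ℤ => p (y - k) := by
    intro k
    apply summable_of_ne_finset_zero (s := Finset.Icc (k - D) (k + D))
    intro y hy
    simp only [Finset.mem_Icc] at hy
    rw [hp, if_neg]
    rw [abs_le]
    omega
  constructor
  · intro n n' hnn' E
    have hδ : 0 ≤ C * Real.exp (-γ * (D : ℝ) ^ 2) := by positivity
    have hsE : ∀ k : ℤ, Summable fun y : E => p ((y : ℤ) - k) := fun k =>
      (hsum k).subtype E
    have hnnE : 0 ≤ ∑' y : E, p ((y : ℤ) - n') :=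
      tsum_nonneg fun y => hp_nonneg _
    rw [abs_le] at hnn'
    by_cases h0 : n = n'
    · subst h0
      have h1 : (1 : ℝ) ≤ Real.exp ε := Real.one_le_exp hε.le
      nlinarith [hnnE]
    · -- m = n - n' is ±1
      obtain ⟨m, hm, hmn⟩ : ∃ m : ℤ, (m = 1 ∨ m = -1) ∧ n - n' = m := by
        rcases (by omega : n - n' = 1 ∨ n - n' = -1) with h | h
        exacts [⟨1, Or.inl rfl, h⟩, ⟨-1, Or.inr rfl, h⟩]
      obtain ⟨b, hb1, hb2⟩ : ∃ b : ℤ, b = m * D ∧ (b = (D : ℤ) ∨ b = -(D : ℤ)) := by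
        rcases hm with rfl | rfl
        exacts [⟨D, by ring, Or.inl rfl⟩, ⟨-D, by ring, Or.inr rfl⟩]
      set g : ℤ → ℝ := fun y => if y = n + b then C * Real.exp (-γ * (D : ℝ) ^ 2) else 0
        with hg
      have hg_nonneg : ∀ y : ℤ, 0 ≤ g y := by
        intro y; rw [hg]; dsimp only; split
        · exact hδ
        · exact le_refl 0
      have hgsum : Summable g := by
        apply summable_of_ne_finset_zero (s := {n + b})
        intro y hy
        simp only [Finset.mem_singleton] at hy
        rw [hg]
        simp [hy]
      have hgE : Summable fun y : E => g (y : ℤ) := hgsum.subtype E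
      have hptwise : ∀ y : ℤ, p (y - n) ≤ Real.exp ε * p (y - n') + g y := by
        intro y
        by_cases hy : y = n + b
        · have habs : |b| ≤ (D : ℤ) := by
            rcases hb2 with rfl | rfl <;> rw [abs_le] <;> omega
          have hcast : ((b : ℤ) : ℝ) ^ 2 = ((D : ℝ)) ^ 2 := by
            rcases hb2 with rfl | rfl <;> push_cast <;> ring
          have h1 : p (y - n) = g y := by
            subst hy
            rw [hg]
            dsimp only
            rw [if_pos rfl, show n + b - n = b by ring, hp b, if_pos habs, hcast]
          rw [h1]
          have := hp_nonneg (y - n')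
          nlinarith [Real.exp_pos ε]
        · have hz : y - n ≠ m * D := by rw [← hb1]; omega
          have h2 := key m (y - n) hm hz
          have h3 : y - n + m = y - n' := by omega
          rw [h3] at h2
          have : g y = 0 := by rw [hg]; simp [hy]
          linarith
      have hrhs_sum : Summable fun y : E => Real.exp ε * p ((y : ℤ) - n') + g y :=
        ((hsE n').mul_left (Real.exp ε)).add hgE
      calc (∑' y : E, p ((y : ℤ) - n))
          ≤ ∑' y : E, (Real.exp ε * p ((y : ℤ) - n') + g y) :=
            Summable.tsum_le_tsum (fun y => hptwise y) (hsE n) hrhs_sum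
        _ = Real.exp ε * (∑' y : E, p ((y : ℤ) - n')) + ∑' y : E, g (y : ℤ) := by
            rw [Summable.tsum_add ((hsE n').mul_left (Real.exp ε)) hgE, tsum_mul_left]
        _ ≤ Real.exp ε * (∑' y : E, p ((y : ℤ) - n')) + C * Real.exp (-γ * (D : ℝ) ^ 2) := by
            gcongr
            have h4 : (∑' y : E, g (y : ℤ)) ≤ ∑' y : ℤ, g y :=
              Summable.tsum_le_tsum_of_inj (Subtype.val) Subtype.val_injective
                (fun c _ => hg_nonneg c) (fun b => le_refl _) hgE hgsum
            have h5 : (∑' y : ℤ, g y) = C * Real.exp (-γ * (D : ℝ) ^ 2) := by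
              rw [hg]
              exact tsum_ite_eq (n + b) _
            linarith
  · -- variance
    have hstep : ∀ z ∈ Finset.Icc (-(D : ℤ)) (D : ℤ),
        (z : ℝ) ^ 2 * p z = C * ((z : ℝ) ^ 2 * Real.exp (-γ * (z : ℝ) ^ 2)) := by
      intro z hz
      simp only [Finset.mem_Icc] at hz
      rw [hp, if_pos (abs_le.2 hz)]
      ring
    rw [Finset.sum_congr rfl hstep, ← Finset.mul_sum]
    rw [sum_Icc_neg_even D (fun z => (z : ℝ) ^ 2 * Real.exp (-γ * (z : ℝ) ^ 2))
      (by intro z; push_cast; ring_nf) (by norm_num)]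
    rw [hC, one_div, inv_mul_eq_div]
    congr 1
    push_cast
    exact Finset.sum_congr rfl fun _ _ => by ring
end
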